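/- (Deterministic bound on the OLS coefficient error.) With ℏ = G^{-1/2}h the ortho-normalized control variates, η* = G^{1/2}β*(f) and η̂ = G^{1/2}β̂ₙᵒˡˢ(f): if λ_min(Pₙ(ℏℏᵀ)) > ‖Pₙ(ℏ)‖₂², then ‖η̂ − η*‖₂ ≤ (‖Pₙ(ℏε)‖₂ + ‖Pₙ(ℏ)‖₂·|Pₙ(ε)|) / (λ_min(Pₙ(ℏℏᵀ)) − ‖Pₙ(ℏ)‖₂²), and consequently |α̂ₙᵒˡˢ(f) − P(f)| ≤ |Pₙ(ε)| + [(‖Pₙ(ℏε)‖₂ + ‖Pₙ(ℏ)‖₂·|Pₙ(ε)|) / (λ_min(Pₙ(ℏℏᵀ)) − ‖Pₙ(ℏ)‖₂²)]·‖Pₙ(ℏ)‖₂. -/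

import Mathlib

open MeasureTheory
open scoped BigOperators Matrix

noncomputable def lamMin {p : ℕ} (A : Matrix (Fin p) (Fin p) ℝ) : ℝ :=
  ⨅ u : {u : Fin p → ℝ // ∑ i, u i ^ 2 = 1}, (u : Fin p → ℝ) ⬝ᵥ A.mulVec u

lemma quad_aux (a b : ℝ) (hb : 0 ≤ b) (H : ∀ t : ℝ, 0 ≤ a * t + b * t ^ 2) : a = 0 := by
  by_contra ha
  have hb1 : (0:ℝ) < b + 1 := by linarith
  have h1 := H (-(a / (b + 1)))
  have key : a * (-(a / (b + 1))) + b * (-(a / (b + 1))) ^ 2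
      = -(a ^ 2) / (b + 1) ^ 2 * ((b + 1) - b) := by field_simp; ring
  have ha2 : (0:ℝ) < a ^ 2 := by positivity
  have hneg : -(a ^ 2) / (b + 1) ^ 2 < 0 :=
    div_neg_of_neg_of_pos (by linarith) (by positivity)
  nlinarith

lemma cs_abs {m : ℕ} (u v : Fin m → ℝ) :
    |∑ k, u k * v k| ≤ Real.sqrt (∑ k, u k ^ 2) * Real.sqrt (∑ k, v k ^ 2) := by
  have h1 := Real.sum_mul_le_sqrt_mul_sqrt Finset.univ u v
  have h2 := Real.sum_mul_le_sqrt_mul_sqrt Finset.univ (fun k => -u k) v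
  simp only [neg_mul, Finset.sum_neg_distrib, neg_sq] at h2
  rw [abs_le]
  exact ⟨by linarith, h1⟩

lemma lamMin_mul_le {p : ℕ} (A : Matrix (Fin p) (Fin p) ℝ)
    (hpos : ∀ u : Fin p → ℝ, 0 ≤ u ⬝ᵥ A.mulVec u) (u : Fin p → ℝ) :
    lamMin A * (∑ k, u k ^ 2) ≤ u ⬝ᵥ A.mulVec u := by
  rcases eq_or_ne (∑ k, u k ^ 2) 0 with hz | hz
  · have hu : u = 0 := by
      funext k
      have := (Finset.sum_eq_zero_iff_of_nonneg (fun i _ => sq_nonneg (u i))).1 hz k (by simp)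
      exact pow_eq_zero_iff (n := 2) (by norm_num) |>.1 this
    simp [hu, hz]
  · have hpos' : 0 < ∑ k, u k ^ 2 :=
      lt_of_le_of_ne (Finset.sum_nonneg fun i _ => sq_nonneg (u i)) (Ne.symm hz)
    set c : ℝ := Real.sqrt (∑ k, u k ^ 2) with hc
    have hcpos : 0 < c := Real.sqrt_pos.2 hpos'
    have hc0 : c ≠ 0 := ne_of_gt hcpos
    have hc2 : c ^ 2 = ∑ k, u k ^ 2 := Real.sq_sqrt hpos'.le
    set w : Fin p → ℝ := fun k => c⁻¹ * u k with hw
    have hwunit : ∑ k, w k ^ 2 = 1 := by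
      simp only [hw, mul_pow, ← Finset.mul_sum, ← hc2]
      field_simp
    have hbdd : BddBelow (Set.range fun u : {u : Fin p → ℝ // ∑ i, u i ^ 2 = 1} =>
        (u : Fin p → ℝ) ⬝ᵥ A.mulVec u) := by
      refine ⟨0, ?_⟩
      rintro x ⟨v, rfl⟩
      exact hpos v
    have hle : lamMin A ≤ w ⬝ᵥ A.mulVec w := ciInf_le hbdd ⟨w, hwunit⟩
    have hquad : w ⬝ᵥ A.mulVec w = c⁻¹ * c⁻¹ * (u ⬝ᵥ A.mulVec u) := by
      simp only [hw, dotProduct, Matrix.mulVec, Finset.mul_sum, Finset.sum_mul]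
      refine Finset.sum_congr rfl fun k _ => ?_
      refine Finset.sum_congr rfl fun j _ => ?_
      ring
    rw [hquad] at hle
    have h2 : lamMin A * c ^ 2 ≤ u ⬝ᵥ A.mulVec u := by
      have hmul := mul_le_mul_of_nonneg_right hle (le_of_lt (by positivity : (0:ℝ) < c ^ 2))
      have hid : c⁻¹ * c⁻¹ * (u ⬝ᵥ A.mulVec u) * c ^ 2
          = u ⬝ᵥ A.mulVec u * (c * c⁻¹) * (c * c⁻¹) := by ring
      rw [hid, mul_inv_cancel₀ hc0, mul_one, mul_one] at hmul
      exact hmul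
    rwa [hc2] at h2

set_option maxHeartbeats 1000000 in
theorem ols_deterministic_error_bound
    {𝒳 : Type*} [MeasurableSpace 𝒳] (P : Measure 𝒳) [IsProbabilityMeasure P]
    (m : ℕ) (f : 𝒳 → ℝ) (h : Fin m → 𝒳 → ℝ)
    (hfL2 : MeasureTheory.MemLp f 2 P) (hhL2 : ∀ k, MeasureTheory.MemLp (h k) 2 P)
    (hh0 : ∀ k, ∫ x, h k x ∂P = 0)
    (βstar : Fin m → ℝ)
    (hβstar : ∀ β : Fin m → ℝ,
      ∫ x, (f x - (∫ y, f y ∂P) - ∑ k, βstar k * h k x) ^ 2 ∂P ≤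
        ∫ x, (f x - (∫ y, f y ∂P) - ∑ k, β k * h k x) ^ 2 ∂P)
    (G : Matrix (Fin m) (Fin m) ℝ)
    (hG : ∀ j k, G j k = ∫ x, h j x * h k x ∂P)
    (hGpd : G.PosDef)
    -- `Gs = G^{1/2}`: the (unique) positive semidefinite square root of `G`
    (Gs : Matrix (Fin m) (Fin m) ℝ) (hGs : Gs.PosSemidef ∧ Gs * Gs = G)
    (n : ℕ) (hn : 0 < n) (X : Fin n → 𝒳)
    (βhat : Fin m → ℝ)
    (hβhat : ∀ β : Fin m → ℝ,
      (∑ i, (f (X i) - (n : ℝ)⁻¹ * (∑ i', f (X i'))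
          - ∑ k, βhat k * (h k (X i) - (n : ℝ)⁻¹ * ∑ i', h k (X i'))) ^ 2)
        ≤ ∑ i, (f (X i) - (n : ℝ)⁻¹ * (∑ i', f (X i'))
          - ∑ k, β k * (h k (X i) - (n : ℝ)⁻¹ * ∑ i', h k (X i'))) ^ 2) :
    -- notation: residual ε, ortho-normalized controls ℏ and the empirical moments
    let ε : 𝒳 → ℝ := fun x => f x - (∫ y, f y ∂P) - ∑ k, βstar k * h k x
    let ℏ : 𝒳 → Fin m → ℝ := fun x => Gs⁻¹.mulVec (fun j => h j x)
    let Pnε : ℝ := (n : ℝ)⁻¹ * ∑ i, ε (X i)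
    let Pnℏ : Fin m → ℝ := fun k => (n : ℝ)⁻¹ * ∑ i, ℏ (X i) k
    let Pnℏε : Fin m → ℝ := fun k => (n : ℝ)⁻¹ * ∑ i, ℏ (X i) k * ε (X i)
    let Gn : Matrix (Fin m) (Fin m) ℝ :=
      Matrix.of fun j k => (n : ℝ)⁻¹ * ∑ i, ℏ (X i) j * ℏ (X i) k
    -- hypothesis: λ_min(Pₙ(ℏℏᵀ)) > ‖Pₙ(ℏ)‖₂²
    (∑ k, Pnℏ k ^ 2) < lamMin Gn →
    -- conclusions
    (Real.sqrt (∑ k, (Gs.mulVec (fun j => βhat j - βstar j)) k ^ 2)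
        ≤ (Real.sqrt (∑ k, Pnℏε k ^ 2)
            + Real.sqrt (∑ k, Pnℏ k ^ 2) * |Pnε|)
          / (lamMin Gn - ∑ k, Pnℏ k ^ 2))
    ∧ |(n : ℝ)⁻¹ * (∑ i, (f (X i) - ∑ k, βhat k * h k (X i))) - ∫ y, f y ∂P|
        ≤ |Pnε|
          + (Real.sqrt (∑ k, Pnℏε k ^ 2)
              + Real.sqrt (∑ k, Pnℏ k ^ 2) * |Pnε|)
            / (lamMin Gn - ∑ k, Pnℏ k ^ 2)
            * Real.sqrt (∑ k, Pnℏ k ^ 2) := by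
  intro ε ℏ Pnε Pnℏ Pnℏε Gn hgap
  classical
  set N : ℝ := (n : ℝ)⁻¹ with hNdef
  have hnR : (0:ℝ) < n := by exact_mod_cast hn
  have hNn : N * (n:ℝ) = 1 := inv_mul_cancel₀ (ne_of_gt hnR)
  have hN0 : 0 ≤ N := by positivity
  obtain ⟨hGsPSD, hGsq⟩ := hGs
  -- Gs is invertible
  have hdetG : 0 < G.det := hGpd.det_pos
  have hdetGs : Gs.det ≠ 0 := by
    intro h0
    rw [← hGsq, Matrix.det_mul, h0, mul_zero] at hdetG
    exact lt_irrefl _ hdetG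
  have hGsunit : IsUnit Gs.det := isUnit_iff_ne_zero.2 hdetGs
  have hGsmul : Gs * Gs⁻¹ = 1 := Matrix.mul_nonsing_inv Gs hGsunit
  have hGsmul' : Gs⁻¹ * Gs = 1 := Matrix.nonsing_inv_mul Gs hGsunit
  have hsy : ∀ j k, Gs j k = Gs k j := by
    intro j k
    have h2 : Gs k j = Gs j k := by simpa using hGsPSD.1.apply j k
    exact h2.symm
  -- representation h = Gs ℏ
  have hrep : ∀ x k, h k x = ∑ j, Gs k j * ℏ x j := by
    intro x k
    have hℏx : Gs.mulVec (ℏ x) = fun j => h j x := by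
      show Gs.mulVec (Gs⁻¹.mulVec _) = _
      rw [Matrix.mulVec_mulVec, hGsmul, Matrix.one_mulVec]
    have hk := congrFun hℏx k
    simpa [Matrix.mulVec, dotProduct] using hk.symm
  -- conversion of linear combinations
  have hconv : ∀ (β : Fin m → ℝ) x, ∑ k, β k * h k x = ∑ k, (Gs.mulVec β) k * ℏ x k := by
    intro β x
    calc ∑ k, β k * h k x = ∑ k, β k * ∑ j, Gs k j * ℏ x j :=
          Finset.sum_congr rfl fun k _ => by rw [hrep]
      _ = ∑ j, (∑ k, Gs j k * β k) * ℏ x j := by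
          simp only [Finset.mul_sum, Finset.sum_mul]
          rw [Finset.sum_comm]
          refine Finset.sum_congr rfl fun j _ => Finset.sum_congr rfl fun k _ => ?_
          rw [hsy k j]; ring
      _ = ∑ k, (Gs.mulVec β) k * ℏ x k :=
          Finset.sum_congr rfl fun j _ => by simp [Matrix.mulVec, dotProduct]
  set δ : Fin m → ℝ := Gs.mulVec (fun j => βhat j - βstar j) with hδdef
  have hδk : ∀ k, δ k = (Gs.mulVec βhat) k - (Gs.mulVec βstar) k := by
    intro k
    simp only [hδdef, Matrix.mulVec, dotProduct, mul_sub, Finset.sum_sub_distrib]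
  -- centered quantities
  set fc : Fin n → ℝ := fun i => f (X i) - N * ∑ i', f (X i') with hfcdef
  set hcv : Fin m → Fin n → ℝ := fun k i => h k (X i) - N * ∑ i', h k (X i') with hhcdef
  set r : Fin n → ℝ := fun i => fc i - ∑ k, βhat k * hcv k i with hrdef
  -- normal equations
  have hNE : ∀ k0, ∑ i, r i * hcv k0 i = 0 := by
    intro k0
    have key : ∀ t : ℝ, 0 ≤ (-2 * ∑ i, r i * hcv k0 i) * t + (∑ i, hcv k0 i ^ 2) * t ^ 2 := by
      intro t
      have H := hβhat (fun k => βhat k + t * (if k = k0 then 1 else 0))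
      have hpert : ∀ i, (f (X i) - N * (∑ i', f (X i'))
          - ∑ k, (βhat k + t * (if k = k0 then 1 else 0)) * (h k (X i) - N * ∑ i', h k (X i')))
          = r i - t * hcv k0 i := by
        intro i
        have hsum1 : ∑ k, (βhat k + t * (if k = k0 then 1 else 0))
              * (h k (X i) - N * ∑ i', h k (X i'))
            = (∑ k, βhat k * hcv k i) + t * hcv k0 i := by
          have hsplit : ∀ k, (βhat k + t * (if k = k0 then 1 else 0))
              * (h k (X i) - N * ∑ i', h k (X i'))
              = βhat k * hcv k i + (if k = k0 then t * hcv k0 i else 0) := by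
            intro k
            by_cases hk : k = k0
            · subst hk
              rw [if_pos rfl, if_pos rfl]
              simp only [hhcdef]
              ring
            · rw [if_neg hk, if_neg hk]
              simp only [hhcdef]
              ring
          rw [Finset.sum_congr rfl fun k _ => hsplit k, Finset.sum_add_distrib,
            Finset.sum_ite_eq' Finset.univ k0, if_pos (Finset.mem_univ k0)]
        rw [hsum1]
        simp only [hrdef, hfcdef]
        ring
      have hbase : ∀ i, (f (X i) - N * (∑ i', f (X i'))
          - ∑ k, βhat k * (h k (X i) - N * ∑ i', h k (X i'))) = r i := by
        intro i
        simp only [hrdef, hfcdef, hhcdef]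
      simp only [hpert, hbase] at H
      have hexp : ∑ i, (r i - t * hcv k0 i) ^ 2
          = (∑ i, r i ^ 2) + ((-2 * ∑ i, r i * hcv k0 i) * t + (∑ i, hcv k0 i ^ 2) * t ^ 2) := by
        have hpt : ∀ i, (r i - t * hcv k0 i) ^ 2
            = r i ^ 2 + ((r i * hcv k0 i) * (-2 * t) + (hcv k0 i ^ 2) * t ^ 2) := by
          intro i; ring
        calc ∑ i, (r i - t * hcv k0 i) ^ 2
            = ∑ i, (r i ^ 2 + ((r i * hcv k0 i) * (-2 * t) + (hcv k0 i ^ 2) * t ^ 2)) :=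
              Finset.sum_congr rfl fun i _ => hpt i
          _ = (∑ i, r i ^ 2) + ((∑ i, r i * hcv k0 i) * (-2 * t)
                + (∑ i, hcv k0 i ^ 2) * t ^ 2) := by
              rw [Finset.sum_add_distrib, Finset.sum_add_distrib, ← Finset.sum_mul,
                ← Finset.sum_mul]
          _ = _ := by ring
      rw [hexp] at H
      linarith
    have := quad_aux (-2 * ∑ i, r i * hcv k0 i) (∑ i, hcv k0 i ^ 2)
      (Finset.sum_nonneg fun i _ => sq_nonneg _) key
    linarith
  -- pass to ℏ coordinates
  set ℏc : Fin m → Fin n → ℝ := fun k i => ℏ (X i) k - N * ∑ i', ℏ (X i') k with hℏcdef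
  have hPnℏ : ∀ k, Pnℏ k = N * ∑ i, ℏ (X i) k := fun k => rfl
  have hPnℏε : ∀ k, Pnℏε k = N * ∑ i, ℏ (X i) k * ε (X i) := fun k => rfl
  have hPnε : Pnε = N * ∑ i, ε (X i) := rfl
  have hGnent : ∀ j k, Gn j k = N * ∑ i, ℏ (X i) j * ℏ (X i) k := fun j k => rfl
  have hhc_rep : ∀ k i, hcv k i = ∑ j, Gs k j * ℏc j i := by
    intro k i
    simp only [hhcdef, hℏcdef]
    rw [hrep (X i) k]
    have hswap : ∑ i', h k (X i') = ∑ j, Gs k j * ∑ i', ℏ (X i') j := by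
      calc ∑ i', h k (X i') = ∑ i', ∑ j, Gs k j * ℏ (X i') j :=
            Finset.sum_congr rfl fun i' _ => hrep (X i') k
        _ = ∑ j, Gs k j * ∑ i', ℏ (X i') j := by
            rw [Finset.sum_comm]
            exact Finset.sum_congr rfl fun j _ => (Finset.mul_sum _ _ _).symm
    rw [hswap, Finset.mul_sum, ← Finset.sum_sub_distrib]
    exact Finset.sum_congr rfl fun j _ => by ring
  have hcoefc : ∀ (β : Fin m → ℝ) i, ∑ k, β k * hcv k i = ∑ j, (Gs.mulVec β) j * ℏc j i := by
    intro β i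
    calc ∑ k, β k * hcv k i = ∑ k, β k * ∑ j, Gs k j * ℏc j i :=
          Finset.sum_congr rfl fun k _ => by rw [hhc_rep]
      _ = ∑ j, (∑ k, Gs j k * β k) * ℏc j i := by
          simp only [Finset.mul_sum, Finset.sum_mul]
          rw [Finset.sum_comm]
          refine Finset.sum_congr rfl fun j _ => Finset.sum_congr rfl fun k _ => ?_
          rw [hsy k j]; ring
      _ = _ := Finset.sum_congr rfl fun j _ => by simp [Matrix.mulVec, dotProduct]
  set εc : Fin n → ℝ := fun i => ε (X i) - N * ∑ i', ε (X i') with hεcdef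
  have hfdec : ∀ x, f x = (∫ y, f y ∂P) + (∑ k, βstar k * h k x) + ε x := by
    intro x
    have : ε x = f x - (∫ y, f y ∂P) - ∑ k, βstar k * h k x := rfl
    linarith [this]
  have hfsum : ∑ i', f (X i') = (n:ℝ) * (∫ y, f y ∂P)
      + (∑ i', ∑ k, βstar k * h k (X i')) + ∑ i', ε (X i') := by
    calc ∑ i', f (X i')
        = ∑ i', ((∫ y, f y ∂P) + (∑ k, βstar k * h k (X i')) + ε (X i')) :=
          Finset.sum_congr rfl fun i' _ => hfdec (X i')
      _ = _ := by
          rw [Finset.sum_add_distrib, Finset.sum_add_distrib, Finset.sum_const,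
            Finset.card_univ, Fintype.card_fin, nsmul_eq_mul]
  have hfc_dec : ∀ i, fc i = (∑ k, βstar k * hcv k i) + εc i := by
    intro i
    have h2 : ∑ k, βstar k * hcv k i
        = (∑ k, βstar k * h k (X i)) - N * ∑ i', ∑ k, βstar k * h k (X i') := by
      simp only [hhcdef, mul_sub, Finset.sum_sub_distrib]
      congr 1
      calc ∑ k, βstar k * (N * ∑ i', h k (X i'))
          = ∑ k, ∑ i', N * (βstar k * h k (X i')) := by
            refine Finset.sum_congr rfl fun k _ => ?_
            rw [Finset.mul_sum, Finset.mul_sum]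
            exact Finset.sum_congr rfl fun i' _ => by ring
        _ = ∑ i', ∑ k, N * (βstar k * h k (X i')) := Finset.sum_comm
        _ = N * ∑ i', ∑ k, βstar k * h k (X i') := by
            rw [Finset.mul_sum]
            exact Finset.sum_congr rfl fun i' _ => (Finset.mul_sum _ _ _).symm
    have hfci : fc i = f (X i) - N * ∑ i', f (X i') := by simp only [hfcdef]
    have hεci : εc i = ε (X i) - N * ∑ i', ε (X i') := by simp only [hεcdef]
    rw [hfci, hfdec (X i), hfsum, h2, hεci]
    linear_combination (-(∫ y, f y ∂P)) * hNn
  have hr_dec : ∀ i, r i = εc i - ∑ j, δ j * ℏc j i := by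
    intro i
    have hri : r i = fc i - ∑ k, βhat k * hcv k i := by simp only [hrdef]
    have hδsum : ∑ j, δ j * ℏc j i
        = (∑ j, (Gs.mulVec βhat) j * ℏc j i) - ∑ j, (Gs.mulVec βstar) j * ℏc j i := by
      rw [← Finset.sum_sub_distrib]
      exact Finset.sum_congr rfl fun j _ => by rw [hδk j]; ring
    rw [hri, hfc_dec i, hcoefc βstar i, hcoefc βhat i, hδsum]
    ring
  -- normal equations in ℏ coordinates
  have hNEh : ∀ j, ∑ i, r i * ℏc j i = 0 := by
    have hv : Gs.mulVec (fun j => ∑ i, r i * ℏc j i) = 0 := by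
      funext k
      have h0 := hNE k
      have hsw : ∑ i, r i * hcv k i = ∑ j, Gs k j * ∑ i, r i * ℏc j i := by
        calc ∑ i, r i * hcv k i = ∑ i, r i * ∑ j, Gs k j * ℏc j i :=
              Finset.sum_congr rfl fun i _ => by rw [hhc_rep]
          _ = ∑ j, Gs k j * ∑ i, r i * ℏc j i := by
              simp only [Finset.mul_sum]
              rw [Finset.sum_comm]
              exact Finset.sum_congr rfl fun j _ =>
                Finset.sum_congr rfl fun i _ => by ring
      show (fun j => Gs k j) ⬝ᵥ (fun j => ∑ i, r i * ℏc j i) = (0 : Fin m → ℝ) k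
      simp only [dotProduct, Pi.zero_apply]
      rw [← hsw, h0]
    have hveq : (fun j => ∑ i, r i * ℏc j i) = (0 : Fin m → ℝ) := by
      have h1 : Gs⁻¹.mulVec (Gs.mulVec (fun j => ∑ i, r i * ℏc j i)) = Gs⁻¹.mulVec 0 := by
        rw [hv]
      rwa [Matrix.mulVec_mulVec, hGsmul', Matrix.one_mulVec, Matrix.mulVec_zero] at h1
    intro j
    exact congrFun hveq j
  -- key identity
  set D : Fin n → ℝ := fun i => ∑ j, δ j * ℏc j i with hDdef
  have hkey : ∑ i, D i ^ 2 = ∑ i, εc i * D i := by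
    have h1 : ∑ j, δ j * (∑ i, r i * ℏc j i) = ∑ i, r i * D i := by
      simp only [hDdef, Finset.mul_sum]
      rw [Finset.sum_comm]
      exact Finset.sum_congr rfl fun i _ => Finset.sum_congr rfl fun j _ => by ring
    have h0 : ∑ j, δ j * (∑ i, r i * ℏc j i) = 0 := by
      simp [hNEh]
    have h2 : ∑ i, r i * D i = ∑ i, εc i * D i - ∑ i, D i ^ 2 := by
      rw [← Finset.sum_sub_distrib]
      refine Finset.sum_congr rfl fun i _ => ?_
      rw [hr_dec i]
      simp only [hDdef]
      ring
    rw [h1, h2] at h0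
    linarith
  -- uncentered versions
  set E : Fin n → ℝ := fun i => ∑ j, δ j * ℏ (X i) j with hEdef
  set d0 : ℝ := ∑ j, δ j * Pnℏ j with hd0def
  have swap3 : ∀ (F : Fin m → Fin m → Fin n → ℝ),
      ∑ j, ∑ k, ∑ i, F j k i = ∑ i, ∑ j, ∑ k, F j k i := by
    intro F
    calc ∑ j, ∑ k, ∑ i, F j k i = ∑ j, ∑ i, ∑ k, F j k i :=
          Finset.sum_congr rfl fun j _ => Finset.sum_comm
      _ = ∑ i, ∑ j, ∑ k, F j k i := Finset.sum_comm
  have hGnquad : ∀ u : Fin m → ℝ, u ⬝ᵥ Gn.mulVec u = N * ∑ i, (∑ j, u j * ℏ (X i) j) ^ 2 := by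
    intro u
    calc u ⬝ᵥ Gn.mulVec u = ∑ j, ∑ k, u j * (Gn j k * u k) := by
          simp only [dotProduct, Matrix.mulVec, Finset.mul_sum]
      _ = ∑ j, ∑ k, ∑ i, N * ((u j * ℏ (X i) j) * (u k * ℏ (X i) k)) := by
          refine Finset.sum_congr rfl fun j _ => Finset.sum_congr rfl fun k _ => ?_
          rw [hGnent j k]
          simp only [Finset.mul_sum, Finset.sum_mul]
          exact Finset.sum_congr rfl fun i _ => by ring
      _ = ∑ i, ∑ j, ∑ k, N * ((u j * ℏ (X i) j) * (u k * ℏ (X i) k)) := swap3 _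
      _ = N * ∑ i, (∑ j, u j * ℏ (X i) j) ^ 2 := by
          rw [Finset.mul_sum]
          refine Finset.sum_congr rfl fun i _ => ?_
          rw [sq, Finset.sum_mul_sum]
          simp only [Finset.mul_sum]
      _ = _ := rfl
  have hGnpos : ∀ u : Fin m → ℝ, 0 ≤ u ⬝ᵥ Gn.mulVec u := by
    intro u
    rw [hGnquad u]
    exact mul_nonneg hN0 (Finset.sum_nonneg fun i _ => sq_nonneg _)
  -- swap identities
  have hG1 : N * ∑ i, E i = d0 := by
    simp only [hEdef, hd0def, Finset.mul_sum]
    rw [Finset.sum_comm]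
    refine Finset.sum_congr rfl fun j _ => ?_
    rw [hPnℏ j, Finset.mul_sum, Finset.mul_sum]
    exact Finset.sum_congr rfl fun i _ => by ring
  have hG3 : N * ∑ i, ε (X i) * E i = ∑ j, δ j * Pnℏε j := by
    simp only [hEdef, Finset.mul_sum]
    rw [Finset.sum_comm]
    refine Finset.sum_congr rfl fun j _ => ?_
    rw [hPnℏε j, Finset.mul_sum, Finset.mul_sum]
    exact Finset.sum_congr rfl fun i _ => by ring
  have hDc : ∀ i, D i = E i - d0 := by
    intro i
    simp only [hDdef, hEdef, hd0def, hℏcdef]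
    simp only [mul_sub, Finset.sum_sub_distrib]
    rfl
  have hεcc : ∀ i, εc i = ε (X i) - Pnε := by
    intro i
    simp only [hεcdef, hPnε]
  -- scalar sums
  have F1 : ∑ i, D i ^ 2 = (∑ i, E i ^ 2) - 2 * d0 * (∑ i, E i) + (n:ℝ) * d0 ^ 2 := by
    calc ∑ i, D i ^ 2 = ∑ i, (E i ^ 2 - (E i) * (2 * d0) + d0 ^ 2) :=
          Finset.sum_congr rfl fun i _ => by rw [hDc i]; ring
      _ = (∑ i, E i ^ 2) - (∑ i, E i) * (2 * d0) + (n:ℝ) * d0 ^ 2 := by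
          rw [Finset.sum_add_distrib, Finset.sum_sub_distrib, ← Finset.sum_mul,
            Finset.sum_const, Finset.card_univ, Fintype.card_fin, nsmul_eq_mul]
      _ = _ := by ring
  have F2 : ∑ i, εc i * D i = (∑ i, ε (X i) * E i) - d0 * (∑ i, ε (X i))
      - Pnε * (∑ i, E i) + (n:ℝ) * (Pnε * d0) := by
    calc ∑ i, εc i * D i
        = ∑ i, (ε (X i) * E i - (ε (X i)) * d0 - (E i) * Pnε + Pnε * d0) :=
          Finset.sum_congr rfl fun i _ => by rw [hεcc i, hDc i]; ring
      _ = (∑ i, ε (X i) * E i) - (∑ i, ε (X i)) * d0 - (∑ i, E i) * Pnε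
          + (n:ℝ) * (Pnε * d0) := by
          rw [Finset.sum_add_distrib, Finset.sum_sub_distrib, Finset.sum_sub_distrib,
            ← Finset.sum_mul, ← Finset.sum_mul, Finset.sum_const, Finset.card_univ,
            Fintype.card_fin, nsmul_eq_mul]
      _ = _ := by ring
  have hG2 : N * ∑ i, ε (X i) = Pnε := hPnε.symm
  set b1 : ℝ := ∑ j, δ j * Pnℏε j with hb1def
  have keyN : N * (∑ i, E i ^ 2) - d0 ^ 2 = b1 - d0 * Pnε := by
    have hI : N * (∑ i, D i ^ 2) = N * (∑ i, E i ^ 2) - d0 ^ 2 := by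
      linear_combination N * F1 + (-2*d0) * hG1 + d0^2 * hNn
    have hII : N * (∑ i, εc i * D i) = b1 - d0 * Pnε := by
      linear_combination N * F2 + hG3 - Pnε * hG1 - d0 * hG2 + Pnε * d0 * hNn
    have := congrArg (fun z => N * z) hkey
    change N * ∑ i, D i ^ 2 = N * ∑ i, εc i * D i at this
    linarith [hI, hII, this]
  -- quantitative bounds
  set s : ℝ := Real.sqrt (∑ k, δ k ^ 2) with hsdef
  have hs0 : 0 ≤ s := Real.sqrt_nonneg _
  have hssq : s ^ 2 = ∑ k, δ k ^ 2 :=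
    Real.sq_sqrt (Finset.sum_nonneg fun k _ => sq_nonneg _)
  set L : ℝ := lamMin Gn with hLdef
  set S : ℝ := ∑ k, Pnℏ k ^ 2 with hSdef
  have hS0 : 0 ≤ S := Finset.sum_nonneg fun k _ => sq_nonneg _
  have hLS : 0 < L - S := by
    linarith [hgap]
  set n1 : ℝ := Real.sqrt (∑ k, Pnℏε k ^ 2) with hn1def
  have hn10 : 0 ≤ n1 := Real.sqrt_nonneg _
  set n2 : ℝ := Real.sqrt S with hn2def
  have hn20 : 0 ≤ n2 := Real.sqrt_nonneg _
  have hquadδ : L * (∑ k, δ k ^ 2) ≤ N * ∑ i, E i ^ 2 := by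
    have h1 := lamMin_mul_le Gn hGnpos δ
    have h2 := hGnquad δ
    have h3 : ∀ i, (∑ j, δ j * ℏ (X i) j) = E i := fun i => rfl
    simp only [h3] at h2
    rw [h2] at h1
    exact h1
  have hd0sq : d0 ^ 2 ≤ (∑ k, δ k ^ 2) * S := by
    simp only [hd0def, hSdef]
    exact Finset.sum_mul_sq_le_sq_mul_sq Finset.univ δ Pnℏ
  have hb1abs : |b1| ≤ s * n1 := cs_abs δ Pnℏε
  have hd0abs : |d0| ≤ s * n2 := by
    have := cs_abs δ Pnℏ
    simpa only [hd0def, hsdef, hn2def, hSdef] using this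
  have hmain : (L - S) * s ^ 2 ≤ s * (n1 + n2 * |Pnε|) := by
    have c1 : (L - S) * s ^ 2 ≤ N * (∑ i, E i ^ 2) - d0 ^ 2 := by
      rw [hssq]
      linarith [hquadδ, hd0sq]
    have c2 : b1 - d0 * Pnε ≤ s * n1 + s * n2 * |Pnε| := by
      have e1 : b1 ≤ |b1| := le_abs_self b1
      have e2 : -(d0 * Pnε) ≤ |d0| * |Pnε| := by
        rw [← abs_mul]
        exact neg_le_abs _
      have e3 : |d0| * |Pnε| ≤ s * n2 * |Pnε| :=
        mul_le_mul_of_nonneg_right hd0abs (abs_nonneg _)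
      linarith [hb1abs]
    calc (L - S) * s ^ 2 ≤ N * (∑ i, E i ^ 2) - d0 ^ 2 := c1
      _ = b1 - d0 * Pnε := keyN
      _ ≤ s * n1 + s * n2 * |Pnε| := c2
      _ = s * (n1 + n2 * |Pnε|) := by ring
  have hBnum0 : 0 ≤ n1 + n2 * |Pnε| :=
    add_nonneg hn10 (mul_nonneg hn20 (abs_nonneg _))
  have hconc1 : s ≤ (n1 + n2 * |Pnε|) / (L - S) := by
    rcases eq_or_lt_of_le hs0 with hs | hs
    · rw [← hs]
      exact div_nonneg hBnum0 hLS.le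
    · have h1 : (L - S) * s * s ≤ (n1 + n2 * |Pnε|) * s := by
        calc (L - S) * s * s = (L - S) * s ^ 2 := by ring
          _ ≤ s * (n1 + n2 * |Pnε|) := hmain
          _ = (n1 + n2 * |Pnε|) * s := by ring
      have h2 : (L - S) * s ≤ n1 + n2 * |Pnε| := le_of_mul_le_mul_right h1 hs
      rw [le_div_iff₀ hLS]
      linarith [h2]
  constructor
  · exact hconc1
  · -- second conclusion
    have hEalt : ∀ i, (∑ k, βhat k * h k (X i)) - ∑ k, βstar k * h k (X i) = E i := by
      intro i
      rw [hconv βhat, hconv βstar, ← Finset.sum_sub_distrib]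
      simp only [hEdef]
      exact Finset.sum_congr rfl fun k _ => by rw [hδk k]; ring
    have hpt : ∀ i, f (X i) - ∑ k, βhat k * h k (X i)
        = (∫ y, f y ∂P) + ε (X i) - E i := by
      intro i
      have h1 := hfdec (X i)
      have h2 := hEalt i
      linarith [h1, h2]
    have hsum2 : ∑ i, (f (X i) - ∑ k, βhat k * h k (X i))
        = (n:ℝ) * (∫ y, f y ∂P) + (∑ i, ε (X i)) - ∑ i, E i := by
      calc ∑ i, (f (X i) - ∑ k, βhat k * h k (X i))
          = ∑ i, ((∫ y, f y ∂P) + ε (X i) - E i) := Finset.sum_congr rfl fun i _ => hpt i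
        _ = _ := by
            rw [Finset.sum_sub_distrib, Finset.sum_add_distrib, Finset.sum_const,
              Finset.card_univ, Fintype.card_fin, nsmul_eq_mul]
    have halpha : N * (∑ i, (f (X i) - ∑ k, βhat k * h k (X i))) - ∫ y, f y ∂P
        = Pnε - d0 := by
      rw [hsum2]
      linear_combination (∫ y, f y ∂P) * hNn + hG2 - hG1
    rw [halpha]
    have htri : |Pnε - d0| ≤ |Pnε| + |d0| := by
      calc |Pnε - d0| = |Pnε + -d0| := by rw [sub_eq_add_neg]
        _ ≤ |Pnε| + |-d0| := abs_add_le _ _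
        _ = |Pnε| + |d0| := by rw [abs_neg]
    have hd0b : |d0| ≤ (n1 + n2 * |Pnε|) / (L - S) * n2 := by
      calc |d0| ≤ s * n2 := hd0abs
        _ ≤ (n1 + n2 * |Pnε|) / (L - S) * n2 :=
          mul_le_mul_of_nonneg_right hconc1 hn20
    calc |Pnε - d0| ≤ |Pnε| + |d0| := htri
      _ ≤ |Pnε| + (n1 + n2 * |Pnε|) / (L - S) * n2 := by linarith [hd0b]
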